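/- Let R be a root system of type A_{ℓ} with ℓ ≥ 3, realized as R = {e_i − e_j : 1 ≤ i ≠ j ≤ ℓ+1}. Then the maximal length μ(α) of an admissible sequence for any root α equals 2, where an admissible sequence (β₁,…,β_q) for α satisfies: every sub-sum β_{j₁}+⋯+β_{j_h} (h ≥ 2, distinct indices) is neither a root nor 0, and α plus every sub-sum of the β's (h ≥ 1, distinct indices) is a root different from α. -/

import Mathlib

open scoped BigOperators

/-- The root system of type `A_ℓ`: `R = { e_i − e_j : i ≠ j }` in `ℝ^{ℓ+1}`. -/
def rootsA (ℓ : ℕ) : Set (Fin (ℓ + 1) → ℝ) :=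
  {v | ∃ i j : Fin (ℓ + 1), i ≠ j ∧ v = Pi.single i (1 : ℝ) - Pi.single j (1 : ℝ)}

/-- `(β₁,…,β_q)` is an admissible sequence for the root `α`: each `β_i` is a root, every
sub-sum of at least two of the `β`'s is neither a root nor `0`, and `α` plus every nonempty
sub-sum of the `β`'s is a root different from `α`. -/
def AdmSeq (ℓ q : ℕ) (α : Fin (ℓ + 1) → ℝ) (β : Fin q → (Fin (ℓ + 1) → ℝ)) : Prop :=
  (∀ i, β i ∈ rootsA ℓ) ∧
  (∀ s : Finset (Fin q), 2 ≤ s.card →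
    (∑ i ∈ s, β i) ∉ rootsA ℓ ∧ (∑ i ∈ s, β i) ≠ 0) ∧
  (∀ s : Finset (Fin q), s.Nonempty →
    (α + ∑ i ∈ s, β i) ∈ rootsA ℓ ∧ α + ∑ i ∈ s, β i ≠ α)

lemma root_vals {ℓ : ℕ} {v : Fin (ℓ + 1) → ℝ} (hv : v ∈ rootsA ℓ) (x : Fin (ℓ + 1)) :
    v x = 1 ∨ v x = 0 ∨ v x = -1 := by
  obtain ⟨p, q, hpq, rfl⟩ := hv
  simp only [Pi.sub_apply, Pi.single_apply]
  split_ifs <;> norm_num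

lemma root_eq_one {ℓ : ℕ} {p q x : Fin (ℓ + 1)}
    (h : ((Pi.single p (1 : ℝ) - Pi.single q (1 : ℝ) : Fin (ℓ + 1) → ℝ)) x = 1) : x = p := by
  by_contra hx
  simp only [Pi.sub_apply, Pi.single_apply, if_neg hx] at h
  split_ifs at h <;> norm_num at h

lemma root_eq_neg_one {ℓ : ℕ} {p q x : Fin (ℓ + 1)}
    (h : ((Pi.single p (1 : ℝ) - Pi.single q (1 : ℝ) : Fin (ℓ + 1) → ℝ)) x = -1) : x = q := by
  by_contra hx
  simp only [Pi.sub_apply, Pi.single_apply, if_neg hx] at h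
  split_ifs at h <;> norm_num at h

lemma root_one_unique {ℓ : ℕ} {v : Fin (ℓ + 1) → ℝ} (hv : v ∈ rootsA ℓ)
    {x y : Fin (ℓ + 1)} (hx : v x = 1) (hy : v y = 1) : x = y := by
  obtain ⟨p, q, hpq, rfl⟩ := hv
  rw [root_eq_one hx, root_eq_one hy]

lemma root_neg_one_unique {ℓ : ℕ} {v : Fin (ℓ + 1) → ℝ} (hv : v ∈ rootsA ℓ)
    {x y : Fin (ℓ + 1)} (hx : v x = -1) (hy : v y = -1) : x = y := by
  obtain ⟨p, q, hpq, rfl⟩ := hv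
  rw [root_eq_neg_one hx, root_eq_neg_one hy]

lemma zero_not_root (ℓ : ℕ) : (0 : Fin (ℓ + 1) → ℝ) ∉ rootsA ℓ := by
  rintro ⟨p, q, hpq, h⟩
  have := congrFun h p
  simp [Pi.single_apply, hpq] at this

lemma beta_type {ℓ : ℕ} {i j : Fin (ℓ + 1)} (hij : i ≠ j)
    {β : Fin (ℓ + 1) → ℝ} (hβ : β ∈ rootsA ℓ)
    (hs : (Pi.single i (1 : ℝ) - Pi.single j (1 : ℝ)) + β ∈ rootsA ℓ) :
    (β i = 0 ∧ β j = 1) ∨ (β i = -1 ∧ β j = 0) := by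
  set α : Fin (ℓ + 1) → ℝ := Pi.single i (1 : ℝ) - Pi.single j (1 : ℝ) with hαdef
  have hαi : α i = 1 := by simp [hαdef, Pi.single_apply, hij]
  have hαj : α j = -1 := by simp [hαdef, Pi.single_apply, hij.symm]
  have hvi := root_vals hs i
  have hvj := root_vals hs j
  simp only [Pi.add_apply, hαi, hαj] at hvi hvj
  have hβi : β i = 0 ∨ β i = -1 := by
    rcases root_vals hβ i with h | h | h <;> rcases hvi with h' | h' | h' <;>
      first | (left; linarith) | (right; linarith) | linarith
  have hβj : β j = 1 ∨ β j = 0 := by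
    rcases root_vals hβ j with h | h | h <;> rcases hvj with h' | h' | h' <;>
      first | (left; linarith) | (right; linarith) | linarith
  rcases hβi with hi0 | hi0 <;> rcases hβj with hj0 | hj0
  · exact Or.inl ⟨hi0, hj0⟩
  · -- β i = 0, β j = 0 : impossible
    exfalso
    obtain ⟨a, b, hab, rfl⟩ := hβ
    have hai : a ≠ i := by
      rintro rfl
      simp [Pi.single_apply, hab.symm] at hi0
    have haj : a ≠ j := by
      rintro rfl
      simp [Pi.single_apply, hab.symm] at hj0
    have h1 : ((α + (Pi.single a (1 : ℝ) - Pi.single b (1 : ℝ)) : Fin (ℓ + 1) → ℝ)) i = 1 := by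
      simp only [Pi.add_apply, hαi, hi0]
      norm_num
    have h2 : ((α + (Pi.single a (1 : ℝ) - Pi.single b (1 : ℝ)) : Fin (ℓ + 1) → ℝ)) a = 1 := by
      have hαa : α a = 0 := by simp [hαdef, Pi.single_apply, hai, haj]
      simp [Pi.add_apply, hαa, Pi.single_apply, hab]
    exact hai (root_one_unique hs h2 h1)
  · -- β i = -1, β j = 1 : β = -α, so α + β = 0, impossible
    exfalso
    obtain ⟨a, b, hab, rfl⟩ := hβ
    have hib : i = b := root_eq_neg_one hi0
    have hja : j = a := root_eq_one hj0
    have hzero : α + (Pi.single a (1 : ℝ) - Pi.single b (1 : ℝ)) = 0 := by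
      rw [hαdef, ← hib, ← hja]; abel
    rw [hzero] at hs
    exact zero_not_root ℓ hs
  · exact Or.inr ⟨hi0, hj0⟩

lemma not_root_type1 {ℓ : ℕ} {i j : Fin (ℓ + 1)} (hij : i ≠ j)
    {u v : Fin (ℓ + 1) → ℝ} (hu : u i = 0 ∧ u j = 1) (hv : v i = 0 ∧ v j = 1) :
    (Pi.single i (1 : ℝ) - Pi.single j (1 : ℝ)) + (u + v) ∉ rootsA ℓ := by
  intro hmem
  set α : Fin (ℓ + 1) → ℝ := Pi.single i (1 : ℝ) - Pi.single j (1 : ℝ) with hαdef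
  have hαi : α i = 1 := by simp [hαdef, Pi.single_apply, hij]
  have hαj : α j = -1 := by simp [hαdef, Pi.single_apply, hij.symm]
  have h1 : (α + (u + v)) i = 1 := by
    simp [Pi.add_apply, hαi, hu.1, hv.1]
  have h2 : (α + (u + v)) j = 1 := by
    simp [Pi.add_apply, hαj, hu.2, hv.2]
  exact hij (root_one_unique hmem h1 h2)

lemma not_root_type2 {ℓ : ℕ} {i j : Fin (ℓ + 1)} (hij : i ≠ j)
    {u v : Fin (ℓ + 1) → ℝ} (hu : u i = -1 ∧ u j = 0) (hv : v i = -1 ∧ v j = 0) :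
    (Pi.single i (1 : ℝ) - Pi.single j (1 : ℝ)) + (u + v) ∉ rootsA ℓ := by
  intro hmem
  set α : Fin (ℓ + 1) → ℝ := Pi.single i (1 : ℝ) - Pi.single j (1 : ℝ) with hαdef
  have hαi : α i = 1 := by simp [hαdef, Pi.single_apply, hij]
  have hαj : α j = -1 := by simp [hαdef, Pi.single_apply, hij.symm]
  have h1 : (α + (u + v)) i = -1 := by
    simp [Pi.add_apply, hαi, hu.1, hv.1]
  have h2 : (α + (u + v)) j = -1 := by
    simp [Pi.add_apply, hαj, hu.2, hv.2]
  exact hij (root_neg_one_unique hmem h1 h2)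

lemma single_sub_ne_zero {ℓ : ℕ} {p q : Fin (ℓ + 1)} (h : p ≠ q) :
    (Pi.single p (1 : ℝ) - Pi.single q (1 : ℝ) : Fin (ℓ + 1) → ℝ) ≠ 0 := by
  intro h0
  have := congrFun h0 p
  simp [Pi.single_apply, h] at this

lemma fin2_subsets : ∀ s : Finset (Fin 2), s.Nonempty →
    s = {0} ∨ s = {1} ∨ s = {0, 1} := by decide

/-- in a root system of type `A_ℓ` with `ℓ ≥ 3`, the maximal length `μ(α)` of an
admissible sequence for any root `α` equals `2`: there is an admissible sequence of length `2`
and none of length `> 2`. -/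
theorem index_typeA_eq_two
    (ℓ : ℕ) (hl : 3 ≤ ℓ) (α : Fin (ℓ + 1) → ℝ) (hα : α ∈ rootsA ℓ) :
    (∃ β : Fin 2 → (Fin (ℓ + 1) → ℝ), AdmSeq ℓ 2 α β) ∧
    (∀ (q : ℕ) (β : Fin q → (Fin (ℓ + 1) → ℝ)), 2 < q → ¬ AdmSeq ℓ q α β) := by
  obtain ⟨i, j, hij, rfl⟩ := hα
  set α : Fin (ℓ + 1) → ℝ := Pi.single i (1 : ℝ) - Pi.single j (1 : ℝ) with hαdef
  constructor
  · -- existence of a length-2 admissible sequence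
    have hcard : 1 < (({i, j} : Finset (Fin (ℓ + 1)))ᶜ).card := by
      have h2 : ({i, j} : Finset (Fin (ℓ + 1))).card ≤ 2 := by
        apply le_trans (Finset.card_insert_le _ _)
        simp
      rw [Finset.card_compl, Fintype.card_fin]
      omega
    obtain ⟨k, hk, m, hm, hkm⟩ := Finset.one_lt_card.mp hcard
    simp only [Finset.mem_compl, Finset.mem_insert, Finset.mem_singleton, not_or] at hk hm
    obtain ⟨hki, hkj⟩ := hk
    obtain ⟨hmi, hmj⟩ := hm
    have hik : i ≠ k := Ne.symm hki
    have hjk : j ≠ k := Ne.symm hkj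
    have hjm : j ≠ m := Ne.symm hmj
    have hmk : m ≠ k := Ne.symm hkm
    have hji : j ≠ i := Ne.symm hij
    refine ⟨![Pi.single j (1 : ℝ) - Pi.single k (1 : ℝ),
              Pi.single m (1 : ℝ) - Pi.single i (1 : ℝ)], ?_, ?_, ?_⟩
    · intro t
      fin_cases t
      · exact ⟨j, k, hjk, rfl⟩
      · exact ⟨m, i, hmi, rfl⟩
    · intro s hs
      have hsu : s = Finset.univ := by
        apply Finset.eq_univ_of_card
        have := Finset.card_le_univ s
        simp only [Fintype.card_fin] at *
        omega
      subst hsu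
      rw [Fin.sum_univ_two]
      simp only [Matrix.cons_val_zero, Matrix.cons_val_one, Matrix.head_cons]
      set w : Fin (ℓ + 1) → ℝ :=
        Pi.single j (1 : ℝ) - Pi.single k (1 : ℝ) + (Pi.single m (1 : ℝ) - Pi.single i (1 : ℝ))
        with hwdef
      have hwj : w j = 1 := by
        simp [hwdef, Pi.single_apply, hjk, hjm, hji]
      have hwm : w m = 1 := by
        simp [hwdef, Pi.single_apply, hmj, hmi, hmk]
      constructor
      · intro hmem
        exact hmj (root_one_unique hmem hwm hwj)
      · intro h0
        rw [h0] at hwj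
        simp at hwj
    · intro s hsne
      rcases fin2_subsets s hsne with rfl | rfl | rfl
      · rw [Finset.sum_singleton]
        simp only [Matrix.cons_val_zero]
        constructor
        · exact ⟨i, k, hik, by rw [hαdef]; abel⟩
        · simp only [ne_eq, add_eq_left]
          exact single_sub_ne_zero hjk
      · rw [Finset.sum_singleton]
        simp only [Matrix.cons_val_one, Matrix.head_cons, Matrix.cons_val_zero]
        constructor
        · exact ⟨m, j, hmj, by rw [hαdef]; abel⟩
        · simp only [ne_eq, add_eq_left]
          exact single_sub_ne_zero hmi
      · rw [Finset.sum_pair (by decide : (0 : Fin 2) ≠ 1)]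
        simp only [Matrix.cons_val_zero, Matrix.cons_val_one, Matrix.head_cons]
        constructor
        · exact ⟨m, k, hmk, by rw [hαdef]; abel⟩
        · simp only [ne_eq, add_eq_left]
          intro h0
          have := congrFun h0 j
          simp [Pi.single_apply, hjk, hjm, hji] at this
  · -- no admissible sequence of length > 2
    rintro q β hq ⟨hroots, hsum2, hsum1⟩
    have key : ∀ t, (β t i = 0 ∧ β t j = 1) ∨ (β t i = -1 ∧ β t j = 0) := by
      intro t
      refine beta_type hij (hroots t) ?_
      have := (hsum1 {t} (Finset.singleton_nonempty t)).1
      rwa [Finset.sum_singleton] at this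
    have pair : ∀ x y : Fin q, x ≠ y → α + (β x + β y) ∈ rootsA ℓ := by
      intro x y hxy
      have := (hsum1 {x, y} ⟨x, by simp⟩).1
      rwa [Finset.sum_pair hxy] at this
    obtain ⟨x0, x1, x2, h01, h02, h12⟩ :
        ∃ x0 x1 x2 : Fin q, x0 ≠ x1 ∧ x0 ≠ x2 ∧ x1 ≠ x2 :=
      ⟨⟨0, by omega⟩, ⟨1, by omega⟩, ⟨2, by omega⟩,
        by simp [Fin.ext_iff], by simp [Fin.ext_iff], by simp [Fin.ext_iff]⟩
    rcases key x0 with h0 | h0 <;> rcases key x1 with h1 | h1 <;> rcases key x2 with h2 | h2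
    · exact not_root_type1 hij h0 h1 (pair x0 x1 h01)
    · exact not_root_type1 hij h0 h1 (pair x0 x1 h01)
    · exact not_root_type1 hij h0 h2 (pair x0 x2 h02)
    · exact not_root_type2 hij h1 h2 (pair x1 x2 h12)
    · exact not_root_type1 hij h1 h2 (pair x1 x2 h12)
    · exact not_root_type2 hij h0 h2 (pair x0 x2 h02)
    · exact not_root_type2 hij h0 h1 (pair x0 x1 h01)
    · exact not_root_type2 hij h0 h1 (pair x0 x1 h01)
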